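/- Let k be a field of characteristic p > 0 and B a commutative k-algebra with a k-algebra homomorphism π : B → k such that x^p = 0 for every x ∈ ker π. Let (K, ∂) be a field extension of k with a B-operator ∂ on K. Then K^p ⊆ K^∂; that is, for every x ∈ K one has ∂(x^p) = x^p ⊗ 1_B. -/
import Mathlib


open TensorProduct

/-- The underlying homomorphism extractor `∂₀ = (id_T ⊗ π) ∘ ∂` of a `B`-operator:
the algebra map `T ⊗[k] B → T` induced by `π : B → k` and `T ⊗[k] k ≅ T`. -/
noncomputable def BOp.counit (k T B : Type*) [CommSemiring k] [CommSemiring T] [Algebra k T]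
    [CommSemiring B] [Algebra k B] (π : B →ₐ[k] k) : T ⊗[k] B →ₐ[k] T :=
  (Algebra.TensorProduct.rid k k T).toAlgHom.comp
    (Algebra.TensorProduct.map (AlgHom.id k T) π)

lemma BOp.counit_tmul (k T B : Type*) [CommSemiring k] [CommSemiring T] [Algebra k T]
    [CommSemiring B] [Algebra k B] (π : B →ₐ[k] k) (a : T) (b : B) :
    BOp.counit k T B π (a ⊗ₜ[k] b) = π b • a := by
  simp [BOp.counit, Algebra.smul_def, mul_comm]

/-- (Lemma 4.9.) Let `k` be a field of characteristic `p > 0` and `B` a commutative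
`k`-algebra with a `k`-algebra map `π : B → k` such that `x ^ p = 0` for every `x ∈ ker π`.
If `(K, δ)` is a field extension of `k` with a `B`-operator `δ` on `K`, then `K^p ⊆ K^δ`:
for every `x ∈ K` one has `δ (x ^ p) = x ^ p ⊗ 1`. -/
theorem BOperator.pow_p_subset_constants
    (p : ℕ) [Fact p.Prime] (k : Type*) [Field k] [CharP k p]
    (B : Type*) [CommRing B] [Algebra k B] (π : B →ₐ[k] k)
    (hπ : ∀ x ∈ RingHom.ker π, x ^ p = 0)
    (K : Type*) [Field K] [Algebra k K]
    (δ : K →ₐ[k] K ⊗[k] B) (hδ0 : (BOp.counit k K B π).comp δ = AlgHom.id k K)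
    (x : K) :
    δ (x ^ p) = (x ^ p) ⊗ₜ[k] (1 : B) := by
  haveI : CharP (K ⊗[k] B) p := by
    refine charP_of_injective_algebraMap (R := k) ?_ p
    have : Function.Injective ((BOp.counit k K B π) ∘ (algebraMap k (K ⊗[k] B))) := by
      have : ((BOp.counit k K B π) ∘ (algebraMap k (K ⊗[k] B))) = algebraMap k K := by
        funext c
        simp only [Function.comp_apply, Algebra.TensorProduct.algebraMap_apply,
          Algebra.algebraMap_self, RingHom.id_apply]
        rw [BOp.counit_tmul]
        simp
      rw [this]
      exact (algebraMap k K).injective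
    exact Function.Injective.of_comp this
  -- the submodule spanned by tensors with second factor in ker π
  set M : Submodule k (K ⊗[k] B) :=
    Submodule.span k {y | ∃ a : K, ∃ b : B, π b = 0 ∧ y = a ⊗ₜ[k] b} with hM
  -- every element of M has p-th power zero
  have hMp : ∀ y ∈ M, y ^ p = 0 := by
    intro y hy
    induction hy using Submodule.span_induction with
    | mem y hy =>
        obtain ⟨a, b, hb, rfl⟩ := hy
        have hb' : b ^ p = 0 := hπ b (by simpa [RingHom.mem_ker] using hb)
        rw [Algebra.TensorProduct.tmul_pow, hb', tmul_zero]
    | zero => simp [zero_pow (Fact.out : p.Prime).ne_zero]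
    | add u v _ _ hu hv => rw [add_pow_char, hu, hv, add_zero]
    | smul c u _ hu => rw [smul_pow, hu, smul_zero]
  -- decompose δ x
  set e : K ⊗[k] B := δ x - x ⊗ₜ[k] 1 with he
  have hcounit : BOp.counit k K B π (δ x) = x := by
    have := congrArg (fun f => (f : K →ₐ[k] K) x) hδ0
    simpa using this
  have hce : BOp.counit k K B π e = 0 := by
    rw [he, map_sub, hcounit, BOp.counit_tmul]
    simp
  -- e ∈ M : every element with counit zero is in M
  have hmem : ∀ z : K ⊗[k] B, z - (BOp.counit k K B π z) ⊗ₜ[k] 1 ∈ M := by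
    intro z
    induction z with
    | zero => simp
    | tmul a b =>
        have : a ⊗ₜ[k] b - (BOp.counit k K B π (a ⊗ₜ[k] b)) ⊗ₜ[k] (1 : B)
            = a ⊗ₜ[k] (b - algebraMap k B (π b)) := by
          rw [BOp.counit_tmul, tmul_sub, smul_tmul, Algebra.algebraMap_eq_smul_one]
        rw [this]
        refine Submodule.subset_span ⟨a, _, ?_, rfl⟩
        simp
    | add u v hu hv =>
        have : u + v - (BOp.counit k K B π (u + v)) ⊗ₜ[k] (1 : B)
            = (u - (BOp.counit k K B π u) ⊗ₜ[k] 1) + (v - (BOp.counit k K B π v) ⊗ₜ[k] 1) := by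
          rw [map_add, add_tmul]; ring
        rw [this]
        exact M.add_mem hu hv
  have heM : e ∈ M := by
    have := hmem (δ x)
    rwa [hcounit, ← he] at this
  have hep : e ^ p = 0 := hMp e heM
  have hδx : δ x = x ⊗ₜ[k] 1 + e := by rw [he]; ring
  calc δ (x ^ p) = (δ x) ^ p := map_pow δ x p
    _ = (x ⊗ₜ[k] 1 + e) ^ p := by rw [hδx]
    _ = (x ⊗ₜ[k] (1 : B)) ^ p + e ^ p := add_pow_char _ _ p
    _ = (x ^ p) ⊗ₜ[k] (1 : B) := by
        rw [hep, add_zero, Algebra.TensorProduct.tmul_pow, one_pow]
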